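/- Let G be a friendly-edge-colorable simple graph. If there exists a vertex x with ν(G \ x) < ν(G), then deg_G(x) = χ'(G). -/

import Mathlib

open scoped Classical

/-- `M` is a matching of `G`, given as a finite set of edges. -/
def IsMatchingFinset {V : Type*} (G : SimpleGraph V) (M : Finset (Sym2 V)) : Prop :=
  (M : Set (Sym2 V)) ⊆ G.edgeSet ∧
    ∀ e ∈ M, ∀ f ∈ M, e ≠ f → ∀ v : V, ¬(v ∈ e ∧ v ∈ f)

/-- ν(G): the maximum size of a matching of `G`. -/
noncomputable def matchingNumber {V : Type*} (G : SimpleGraph V) : ℕ :=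
  sSup {n | ∃ M : Finset (Sym2 V), IsMatchingFinset G M ∧ M.card = n}

/-- A proper edge coloring of `G` using colors `< n`. -/
def IsProperEdgeColoring {V : Type*} (G : SimpleGraph V) (n : ℕ) (c : Sym2 V → ℕ) : Prop :=
  (∀ e ∈ G.edgeSet, c e < n) ∧
    ∀ e ∈ G.edgeSet, ∀ f ∈ G.edgeSet, e ≠ f → (∃ v : V, v ∈ e ∧ v ∈ f) → c e ≠ c f

/-- χ'(G): the edge chromatic index of `G`. -/
noncomputable def chromaticIndex {V : Type*} (G : SimpleGraph V) : ℕ :=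
  sInf {n | ∃ c : Sym2 V → ℕ, IsProperEdgeColoring G n c}

/-- `G` is friendly-edge-colorable: its edge set is partitioned into maximum matchings. -/
noncomputable def Friendly {V : Type*} [Fintype V] (G : SimpleGraph V) : Prop :=
  ∃ P : Finset (Finset (Sym2 V)),
    (∀ M ∈ P, IsMatchingFinset G M ∧ M.card = matchingNumber G) ∧
    (∀ e, e ∈ G.edgeFinset ↔ ∃ M ∈ P, e ∈ M) ∧
    ∀ M ∈ P, ∀ N ∈ P, M ≠ N → Disjoint M N

/-- The graph `G` with vertex `x` deleted. -/
def delVert {V : Type*} (G : SimpleGraph V) (x : V) : SimpleGraph {v : V // v ≠ x} :=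
  G.induce {v : V | v ≠ x}

/-- `G` has a perfect matching. -/
def HasPerfectMatchingFinset {V : Type*} (G : SimpleGraph V) : Prop :=
  ∃ M : Finset (Sym2 V), IsMatchingFinset G M ∧ ∀ v : V, ∃ e ∈ M, v ∈ e

/-- `G` is factor-critical. -/
def FactorCritical {V : Type*} (G : SimpleGraph V) : Prop :=
  G.Connected ∧ ∀ x : V, HasPerfectMatchingFinset (delVert G x)

/-- matchings are subsets of the edge finset -/
lemma matching_subset_edgeFinset {V : Type*} [Fintype V] {G : SimpleGraph V}
    {M : Finset (Sym2 V)} (h : IsMatchingFinset G M) : M ⊆ G.edgeFinset := by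
  intro e he
  exact SimpleGraph.mem_edgeFinset.mpr (h.1 he)

lemma matchingSet_bddAbove {V : Type*} [Fintype V] (G : SimpleGraph V) :
    BddAbove {n | ∃ M : Finset (Sym2 V), IsMatchingFinset G M ∧ M.card = n} := by
  refine ⟨G.edgeFinset.card, ?_⟩
  rintro n ⟨M, hM, rfl⟩
  exact Finset.card_le_card (matching_subset_edgeFinset hM)

lemma le_matchingNumber {V : Type*} [Fintype V] {G : SimpleGraph V}
    {M : Finset (Sym2 V)} (h : IsMatchingFinset G M) : M.card ≤ matchingNumber G :=
  le_csSup (matchingSet_bddAbove G) ⟨M, h, rfl⟩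

theorem stmt_12 {V : Type*} [Fintype V] (G : SimpleGraph V) (hG : Friendly G)
    (x : V) (hx : matchingNumber (delVert G x) < matchingNumber G) :
    G.degree x = chromaticIndex G := by
  obtain ⟨P, hmax, hcov, hdisj⟩ := hG
  -- Step 1: every maximum matching contains an edge through x.
  have hcover : ∀ M : Finset (Sym2 V), IsMatchingFinset G M → M.card = matchingNumber G →
      ∃ e ∈ M, x ∈ e := by
    intro M hM hcard
    by_contra hno
    push_neg at hno
    -- pick a vertex y ≠ x (M is nonempty since card = ν(G) > 0)
    have hpos : 0 < M.card := by omega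
    obtain ⟨e0, he0⟩ := Finset.card_pos.mp hpos
    set a0 : V := e0.out.1 with ha0def
    have ha0mem : a0 ∈ e0 := Sym2.out_fst_mem e0
    have ha0 : a0 ≠ x := by
      intro h; exact hno e0 he0 (h ▸ ha0mem)
    set g : V → {v : V // v ≠ x} := fun v => if h : v = x then ⟨a0, ha0⟩ else ⟨v, h⟩ with hg
    have hgval : ∀ v : V, v ≠ x → (g v : V) = v := by
      intro v hv; simp [hg, hv]
    have hxnot : ∀ e ∈ M, ¬ x ∈ e := fun e he h => hno e he h
    -- map edges
    have hback : ∀ e ∈ M, Sym2.map (fun u : {v : V // v ≠ x} => (u : V)) (Sym2.map g e) = e := by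
      intro e he
      induction e using Sym2.ind with
      | _ a b =>
        have ha : a ≠ x := fun h => hxnot _ he (h ▸ Sym2.mem_mk_left a b)
        have hb : b ≠ x := fun h => hxnot _ he (h ▸ Sym2.mem_mk_right a b)
        simp [Sym2.map_pair_eq, hgval a ha, hgval b hb]
    set M' : Finset (Sym2 {v : V // v ≠ x}) := M.image (Sym2.map g) with hM'
    have hcard' : M'.card = M.card := by
      rw [hM']
      apply Finset.card_image_of_injOn
      intro e he f hf hef
      rw [← hback e he, ← hback f hf, hef]
    have hmem' : ∀ e' ∈ M', ∃ e ∈ M, e' = Sym2.map g e ∧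
        Sym2.map (fun u : {v : V // v ≠ x} => (u : V)) e' = e := by
      intro e' he'
      obtain ⟨e, he, rfl⟩ := Finset.mem_image.mp he'
      exact ⟨e, he, rfl, hback e he⟩
    have hmatch' : IsMatchingFinset (delVert G x) M' := by
      constructor
      · intro e' he'
        obtain ⟨e, he, rfl, _⟩ := hmem' e' (by exact_mod_cast he')
        induction e using Sym2.ind with
        | _ a b =>
          have ha : a ≠ x := fun h => hxnot _ he (h ▸ Sym2.mem_mk_left a b)
          have hb : b ≠ x := fun h => hxnot _ he (h ▸ Sym2.mem_mk_right a b)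
          have hadj : G.Adj a b := by
            have := hM.1 he
            rwa [SimpleGraph.mem_edgeSet] at this
          rw [Sym2.map_pair_eq, SimpleGraph.mem_edgeSet]
          show (delVert G x).Adj (g a) (g b)
          have hadj' : G.Adj ((g a : V)) ((g b : V)) := by rwa [hgval a ha, hgval b hb]
          exact hadj'
      · intro e' he' f' hf' hne v' hv'
        obtain ⟨e, he, rfl, hbe⟩ := hmem' e' he'
        obtain ⟨f, hf, rfl, hbf⟩ := hmem' f' hf'
        have hef : e ≠ f := by
          intro h; exact hne (by rw [h])
        obtain ⟨a, haE, hga⟩ := Sym2.mem_map.mp hv'.1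
        obtain ⟨b, hbF, hgb⟩ := Sym2.mem_map.mp hv'.2
        have ha : a ≠ x := fun h => hxnot _ he (h ▸ haE)
        have hb : b ≠ x := fun h => hxnot _ hf (h ▸ hbF)
        have hab : a = b := by
          have : (g a : V) = (g b : V) := by rw [hga, hgb]
          rwa [hgval a ha, hgval b hb] at this
        exact hM.2 e he f hf hef a ⟨haE, hab ▸ hbF⟩
    have : matchingNumber G ≤ matchingNumber (delVert G x) := by
      calc matchingNumber G = M'.card := by rw [hcard', hcard]
        _ ≤ _ := le_matchingNumber hmatch'
    omega
  -- each M in P contains exactly one edge through x; get bijection with incidenceFinset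
  have hdeg : G.degree x = P.card := by
    rw [← SimpleGraph.card_incidenceFinset_eq_degree]
    symm
    apply Finset.card_bij (fun M hM => (hcover M (hmax M hM).1 (hmax M hM).2).choose)
    · intro M hM
      obtain ⟨heM, hxe⟩ := (hcover M (hmax M hM).1 (hmax M hM).2).choose_spec
      rw [SimpleGraph.mem_incidenceFinset]
      exact ⟨(hmax M hM).1.1 heM, hxe⟩
    · intro M hM N hN heq
      by_contra hne
      have hdMN := hdisj M hM N hN hne
      obtain ⟨heM, _⟩ := (hcover M (hmax M hM).1 (hmax M hM).2).choose_spec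
      obtain ⟨heN, _⟩ := (hcover N (hmax N hN).1 (hmax N hN).2).choose_spec
      rw [heq] at heM
      exact Finset.disjoint_left.mp hdMN heM heN
    · intro e he
      rw [SimpleGraph.mem_incidenceFinset] at he
      obtain ⟨M, hMP, heM⟩ := (hcov e).mp (SimpleGraph.mem_edgeFinset.mpr he.1)
      refine ⟨M, hMP, ?_⟩
      obtain ⟨heM', hxe'⟩ := (hcover M (hmax M hMP).1 (hmax M hMP).2).choose_spec
      by_contra hne
      exact (hmax M hMP).1.2 _ heM' _ heM hne x ⟨hxe', he.2⟩
  -- chromatic index ≤ P.card : color by which matching an edge is in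
  have hcol : ∃ c : Sym2 V → ℕ, IsProperEdgeColoring G P.card c := by
    set L := P.toList with hL
    refine ⟨fun e => L.idxOf (if h : ∃ M ∈ P, e ∈ M then h.choose else ∅), ?_, ?_⟩
    · intro e he
      have h : ∃ M ∈ P, e ∈ M := (hcov e).mp (SimpleGraph.mem_edgeFinset.mpr he)
      simp only [dif_pos h]
      have : h.choose ∈ L := Finset.mem_toList.mpr h.choose_spec.1
      calc L.idxOf h.choose < L.length := List.idxOf_lt_length_iff.mpr this
        _ = P.card := Finset.length_toList P
    · intro e he f hf hne ⟨v, hve, hvf⟩ hc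
      have h1 : ∃ M ∈ P, e ∈ M := (hcov e).mp (SimpleGraph.mem_edgeFinset.mpr he)
      have h2 : ∃ M ∈ P, f ∈ M := (hcov f).mp (SimpleGraph.mem_edgeFinset.mpr hf)
      simp only [dif_pos h1, dif_pos h2] at hc
      have hMeq : h1.choose = h2.choose :=
        (List.idxOf_inj (Finset.mem_toList.mpr h1.choose_spec.1)).mp
          hc
      have := (hmax _ h1.choose_spec.1).1.2 e h1.choose_spec.2 f
        (hMeq ▸ h2.choose_spec.2) hne v
      exact this ⟨hve, hvf⟩
  have hupper : chromaticIndex G ≤ P.card := Nat.sInf_le hcol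
  -- degree ≤ chromatic index
  have hlower : (G.degree x : ℕ) ≤ chromaticIndex G := by
    apply le_csInf ⟨P.card, hcol⟩
    rintro n ⟨c, hc1, hc2⟩
    rw [← SimpleGraph.card_incidenceFinset_eq_degree]
    have : (G.incidenceFinset x).card ≤ (Finset.range n).card := by
      apply Finset.card_le_card_of_injOn c
      · intro e he
        rw [Finset.mem_coe, SimpleGraph.mem_incidenceFinset] at he
        exact Finset.mem_coe.mpr (Finset.mem_range.mpr (hc1 e he.1))
      · intro e he f hf hcef
        rw [Finset.mem_coe, SimpleGraph.mem_incidenceFinset] at he hf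
        by_contra hne
        exact hc2 e he.1 f hf.1 hne ⟨x, he.2, hf.2⟩ hcef
    simpa using this
  omega
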